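/- Let 𝒞 ⊆ ℝ^d be an open convex set and 𝒟 = {q₁,…,q_N} ⊆ ℝ^d. The following are equivalent: (1) there exists a map X̂ : ℝ^N → 𝒫(ℝ^d) such that for every c ∈ 𝒞, X̂(c⊤q₁,…,c⊤q_N) = argmin_{x∈𝒳} c⊤x; (2) there exists a map x̂ : ℝ^N → 𝒳 such that for every c ∈ 𝒞, x̂(c⊤q₁,…,c⊤q_N) ∈ argmin_{x∈𝒳} c⊤x. -/
import Mathlib


open scoped RealInnerProductSpace
open Classical

noncomputable section

abbrev Vec (d : ℕ) := EuclideanSpace ℝ (Fin d)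

/-- The feasible set 𝒳 = {x : Ax = b, x ≥ 0}. -/
def feasibleSet {d m : ℕ} (A : Matrix (Fin m) (Fin d) ℝ) (b : Fin m → ℝ) : Set (Vec d) :=
  {x | A.mulVec x = b ∧ ∀ i, 0 ≤ x i}

/-- argmin_{x ∈ X} c⊤x. -/
def argminSet {d : ℕ} (X : Set (Vec d)) (c : Vec d) : Set (Vec d) :=
  {x | x ∈ X ∧ ∀ y ∈ X, ⟪c, x⟫ ≤ ⟪c, y⟫}

/-- 𝒟 = {q 1, …, q N} is a sufficient decision dataset for 𝒞 and 𝒳. -/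
def SufficientDataset {d N : ℕ} (C : Set (Vec d)) (X : Set (Vec d)) (q : Fin N → Vec d) : Prop :=
  ∃ Xhat : (Fin N → ℝ) → Set (Vec d),
    ∀ c ∈ C, Xhat (fun i => ⟪c, q i⟫) = argminSet X c

/-- Extreme points of X. -/
def extremePts {d : ℕ} (X : Set (Vec d)) : Set (Vec d) :=
  {x | x ∈ X ∧ ¬ ∃ (l : ℝ) (y z : Vec d), y ∈ X ∧ z ∈ X ∧ y ≠ z ∧
    l ∈ Set.Ioo (0:ℝ) 1 ∧ x = l • y + (1 - l) • z}

/-- Feasible directions from x in X. -/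
def FD {d : ℕ} (X : Set (Vec d)) (x : Vec d) : Set (Vec d) :=
  {δ | ∃ ε : ℝ, 0 < ε ∧ x + ε • δ ∈ X}

/-- Extreme directions of FD(x). -/
def extremeDirs {d : ℕ} (X : Set (Vec d)) (x : Vec d) : Set (Vec d) :=
  {δ | δ ∈ FD X x ∧ δ ≠ 0 ∧ ¬ ∃ (l : ℝ) (δ₁ δ₂ : Vec d), δ₁ ∈ FD X x ∧ δ₂ ∈ FD X x ∧
    (∀ t : ℝ, δ₁ ≠ t • δ₂) ∧ l ∈ Set.Ioo (0:ℝ) 1 ∧ δ = l • δ₁ + (1 - l) • δ₂}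

/-- Optimality cone Λ(x). -/
def Lam {d : ℕ} (X : Set (Vec d)) (x : Vec d) : Set (Vec d) :=
  {c | x ∈ argminSet X c}

/-- The face F(x, δ) = Λ(x) ∩ {δ}^⊥. -/
def faceF {d : ℕ} (X : Set (Vec d)) (x δ : Vec d) : Set (Vec d) :=
  Lam X x ∩ {c | ⟪c, δ⟫ = 0}

/-- Relevant extreme directions Δ(𝒳, 𝒞). -/
def DeltaSet {d : ℕ} (X C : Set (Vec d)) : Set (Vec d) :=
  {δ | ∃ x ∈ extremePts X, δ ∈ extremeDirs X x ∧ (faceF X x δ ∩ C).Nonempty}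

/-- F₀: the span of the canonical basis vectors eᵢ with xᵢ ≠ 0 for some x ∈ X. -/
def F0 {d : ℕ} (X : Set (Vec d)) : Submodule ℝ (Vec d) :=
  Submodule.span ℝ {v | ∃ i : Fin d, (∃ x ∈ X, x i ≠ 0) ∧ v = EuclideanSpace.single i 1}

/-- Ker A as a submodule of ℝ^d. -/
def kerA {d m : ℕ} (A : Matrix (Fin m) (Fin d) ℝ) : Submodule ℝ (Vec d) :=
  LinearMap.ker ((Matrix.mulVecLin A).comp (WithLp.linearEquiv 2 ℝ (Fin d → ℝ)).toLinearMap)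

/-- Reachable optimal solutions 𝒳*(𝒞). -/
def reachable {d : ℕ} (X C : Set (Vec d)) : Set (Vec d) := ⋃ c ∈ C, argminSet X c

/-- dir(𝒳*(𝒞)) = span of differences of reachable solutions. -/
def dirSpan {d : ℕ} (X C : Set (Vec d)) : Submodule ℝ (Vec d) :=
  Submodule.span ℝ {v | ∃ x₁ ∈ reachable X C, ∃ x₂ ∈ reachable X C, v = x₁ - x₂}

/-- 𝒞-strong neighbors. -/
def StrongNeighbors {d : ℕ} (X C : Set (Vec d)) (x₁ x₂ : Vec d) : Prop :=
  x₂ - x₁ ∈ extremeDirs X x₁ ∧ ∃ c ∈ C, x₁ ∈ argminSet X c ∧ x₂ ∈ argminSet X c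

/-- Y is 𝒞-strongly connected by neighboring extreme points. -/
def StronglyConnected {d : ℕ} (X C Y : Set (Vec d)) : Prop :=
  ∀ x ∈ Y, ∀ x' ∈ Y, ∃ (h : ℕ) (seq : Fin (h + 1) → Vec d),
    (∀ i, seq i ∈ Y) ∧ seq 0 = x ∧ seq (Fin.last h) = x' ∧
    ∀ i : Fin h, StrongNeighbors X C (seq i.castSucc) (seq i.succ)


/-- The feasible set is closed. -/
lemma feasible_isClosed_aux {d m : ℕ} (A : Matrix (Fin m) (Fin d) ℝ) (b : Fin m → ℝ) :
    IsClosed (feasibleSet A b) := by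
  have h1 : IsClosed {x : Vec d | A.mulVec x = b} := by
    have : Continuous fun x : Vec d => A.mulVec x :=
      (A.mulVecLin.comp (WithLp.linearEquiv 2 ℝ (Fin d → ℝ)).toLinearMap).continuous_of_finiteDimensional
    exact isClosed_eq this continuous_const
  have h2 : IsClosed {x : Vec d | ∀ i, 0 ≤ x i} := by
    have : {x : Vec d | ∀ i, 0 ≤ x i} = ⋂ i, {x : Vec d | 0 ≤ x i} := by ext x; simp
    rw [this]
    exact isClosed_iInter fun i =>
      isClosed_le continuous_const ((EuclideanSpace.proj i : Vec d →L[ℝ] ℝ).continuous)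
  exact h1.inter h2

/-- The argmin set is nonempty (compactness). -/
lemma argmin_nonempty_aux {d m : ℕ} (A : Matrix (Fin m) (Fin d) ℝ) (b : Fin m → ℝ)
    (hne : (feasibleSet A b).Nonempty) (hbdd : Bornology.IsBounded (feasibleSet A b))
    (c : Vec d) : (argminSet (feasibleSet A b) c).Nonempty := by
  have hcpt : IsCompact (feasibleSet A b) :=
    Metric.isCompact_of_isClosed_isBounded (feasible_isClosed_aux A b) hbdd
  have hcont : Continuous fun x : Vec d => ⟪c, x⟫ := continuous_const.inner continuous_id
  obtain ⟨x, hx, hmin⟩ := hcpt.exists_isMinOn hne hcont.continuousOn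
  exact ⟨x, hx, fun y hy => hmin hy⟩

/-- If two costs in the open set C induce the same data vector, their argmin sets
agree (one inclusion; symmetry gives the other). -/
lemma argmin_subset_of_eq_data_aux {d N : ℕ} (X C : Set (Vec d)) (hCopen : IsOpen C)
    (q : Fin N → Vec d) (xhat : (Fin N → ℝ) → Vec d)
    (hx : ∀ c ∈ C, xhat (fun i => ⟪c, q i⟫) ∈ argminSet X c)
    (c c' : Vec d) (hc : c ∈ C) (hc' : c' ∈ C)
    (hdata : (fun i => ⟪c, q i⟫) = (fun i => ⟪c', q i⟫)) :
    argminSet X c ⊆ argminSet X c' := by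
  intro x hxarg
  set xs := xhat (fun i => ⟪c, q i⟫) with hxs
  have hs : xs ∈ argminSet X c := hx c hc
  have hs' : xs ∈ argminSet X c' := by
    have := hx c' hc'; rwa [← hdata] at this
  obtain ⟨r, hr, hball⟩ := Metric.isOpen_iff.mp hCopen c hc
  by_cases hcc : c = c'
  · exact hcc ▸ hxarg
  have hnorm : 0 < ‖c - c'‖ := by
    rw [norm_pos_iff]; exact sub_ne_zero.mpr hcc
  set ε := r / (2 * ‖c - c'‖) with hε
  have hεpos : 0 < ε := div_pos hr (by positivity)
  have hmem : c + ε • (c - c') ∈ C := by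
    apply hball
    rw [Metric.mem_ball, dist_eq_norm]
    have : c + ε • (c - c') - c = ε • (c - c') := by abel
    rw [this, norm_smul, Real.norm_eq_abs, abs_of_pos hεpos, hε]
    rw [div_mul_eq_mul_div, mul_comm]
    rw [div_lt_iff₀ (by positivity)]
    nlinarith
  have hdata2 : (fun i => ⟪c + ε • (c - c'), q i⟫) = (fun i => ⟪c, q i⟫) := by
    funext i
    have h1 : ⟪c, q i⟫ = ⟪c', q i⟫ := congrFun hdata i
    rw [inner_add_left, real_inner_smul_left, inner_sub_left, h1]
    ring
  have hs2 : xs ∈ argminSet X (c + ε • (c - c')) := by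
    have := hx (c + ε • (c - c')) hmem; rwa [hdata2] at this
  have heq : ⟪c, x⟫ = ⟪c, xs⟫ :=
    le_antisymm (hxarg.2 xs hs.1) (hs.2 x hxarg.1)
  have hkey : ⟪c + ε • (c - c'), xs⟫ ≤ ⟪c + ε • (c - c'), x⟫ := hs2.2 x hxarg.1
  have hkey2 : ⟪c', x⟫ ≤ ⟪c', xs⟫ := by
    rw [inner_add_left, inner_add_left, real_inner_smul_left, real_inner_smul_left,
      inner_sub_left, inner_sub_left] at hkey
    have hcs : ⟪c, xs⟫ ≤ ⟪c, x⟫ := hs.2 x hxarg.1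
    nlinarith [heq]
  exact ⟨hxarg.1, fun y hy => le_trans hkey2 (hs'.2 y hy)⟩

/-- for an open convex uncertainty set, recovering the whole argmin set
is equivalent to recovering a single optimal solution. -/
theorem stmt1 {d m N : ℕ} (A : Matrix (Fin m) (Fin d) ℝ) (b : Fin m → ℝ)
    (hne : (feasibleSet A b).Nonempty) (hbdd : Bornology.IsBounded (feasibleSet A b))
    (C : Set (Vec d)) (hCopen : IsOpen C) (hCconv : Convex ℝ C)
    (q : Fin N → Vec d) :
    (∃ Xhat : (Fin N → ℝ) → Set (Vec d),
        ∀ c ∈ C, Xhat (fun i => ⟪c, q i⟫) = argminSet (feasibleSet A b) c) ↔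
    (∃ xhat : (Fin N → ℝ) → Vec d, (∀ o, xhat o ∈ feasibleSet A b) ∧
        ∀ c ∈ C, xhat (fun i => ⟪c, q i⟫) ∈ argminSet (feasibleSet A b) c) := by
  constructor
  · rintro ⟨Xhat, hXhat⟩
    refine ⟨fun o => if h : (Xhat o ∩ feasibleSet A b).Nonempty then h.choose else hne.choose,
      ?_, ?_⟩
    · intro o
      by_cases h : (Xhat o ∩ feasibleSet A b).Nonempty
      · simp only [dif_pos h]; exact h.choose_spec.2
      · simp only [dif_neg h]; exact hne.choose_spec
    · intro c hc
      have harg := argmin_nonempty_aux A b hne hbdd c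
      have h : (Xhat (fun i => ⟪c, q i⟫) ∩ feasibleSet A b).Nonempty := by
        rw [hXhat c hc]
        exact ⟨harg.choose, harg.choose_spec, harg.choose_spec.1⟩
      simp only [dif_pos h]
      have h2 := h.choose_spec.1
      exact Set.mem_of_mem_of_subset h2 (hXhat c hc).le
  · rintro ⟨xhat, hfeas, hx⟩
    refine ⟨fun o => if h : ∃ c, c ∈ C ∧ (fun i => ⟪c, q i⟫) = o
        then argminSet (feasibleSet A b) h.choose else ∅, ?_⟩
    intro c hc
    have h : ∃ c', c' ∈ C ∧ (fun i => ⟪c', q i⟫) = (fun i => ⟪c, q i⟫) :=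
      ⟨c, hc, rfl⟩
    simp only [dif_pos h]
    obtain ⟨hc0, hd0⟩ := h.choose_spec
    exact Set.Subset.antisymm
      (argmin_subset_of_eq_data_aux _ C hCopen q xhat hx _ c hc0 hc hd0)
      (argmin_subset_of_eq_data_aux _ C hCopen q xhat hx c _ hc hc0 hd0.symm)
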